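/- For every even n ≥ 2, the number of binary strings s of length n that are both primitive and reflexive (i.e. ι(s) is a cyclic shift of s) equals Σ_{m | n/2, m odd} μ(m)·2^{n/(2m)}, where μ is the Möbius function. -/

import Mathlib

open Finset

namespace Necklaces

variable {n : ℕ}

/-- The cyclic left shift `L` on binary strings of length `n`. -/
def shiftL (s : Fin n → Bool) : Fin n → Bool :=
  fun i => s ⟨(i.val + 1) % n, Nat.mod_lt _ (Nat.lt_of_le_of_lt (Nat.zero_le _) i.isLt)⟩

/-- Digitwise inversion (complement) `ι`. -/
def inv (s : Fin n → Bool) : Fin n → Bool := fun i => !(s i)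

/-- A string is primitive if no nontrivial cyclic shift fixes it. -/
def Primitive (s : Fin n → Bool) : Prop :=
  ∀ k : ℕ, 0 < k → k < n → shiftL^[k] s ≠ s

/-- The necklace `⟨s⟩`: the orbit of `s` under cyclic shifts. -/
def necklace (s : Fin n → Bool) : Set (Fin n → Bool) :=
  {t | ∃ k : ℕ, t = shiftL^[k] s}

/-- The necklace inversion class `[s]`: the orbit of `s` under cyclic shifts and inversion. -/
def invClass (s : Fin n → Bool) : Set (Fin n → Bool) :=
  {t | ∃ k : ℕ, t = shiftL^[k] s ∨ t = inv (shiftL^[k] s)}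

/-- The number of 1's in `s`. -/
def onesCard (s : Fin n → Bool) : ℕ := (univ.filter (fun i => s i = true)).card

/-- The mod-2 partial sum map `Ξ`: the `i`-th digit of `Ξ(s)` is `s₁+⋯+sᵢ (mod 2)`. -/
def xi (s : Fin n → Bool) : Fin n → Bool :=
  fun i => decide (Odd ((Finset.Iic i).filter (fun j => s j = true)).card)

/-- `ι(s)` is a cyclic shift of `s`. -/
def ReflexiveStr (s : Fin n → Bool) : Prop := ∃ k : ℕ, shiftL^[k] s = inv s

/-- `s` consists of two copies of a primitive string of length `n/2`
with an odd number of 1's. -/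
def TwoCopies (s : Fin n → Bool) : Prop :=
  n % 2 = 0 ∧ shiftL^[n / 2] s = s ∧ (∀ k : ℕ, 0 < k → k < n / 2 → shiftL^[k] s ≠ s) ∧
    Odd ((univ.filter (fun i : Fin n => i.val < n / 2 ∧ s i = true)).card)

/-- `s` generates a necklace belonging to `Ñ⁺(n)`. -/
def GoodPlus (s : Fin n → Bool) : Prop :=
  (Primitive s ∧ Even (onesCard s)) ∨ TwoCopies s

/-- The set `Ñ⁺(n)` of necklaces. -/
def NtildePlus (n : ℕ) : Set (Set (Fin n → Bool)) :=
  {N | ∃ s : Fin n → Bool, GoodPlus s ∧ N = necklace s}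

/-- The set `N̄(n)` of necklace inversion classes of primitive strings. -/
def Nbar (n : ℕ) : Set (Set (Fin n → Bool)) :=
  {C | ∃ s : Fin n → Bool, Primitive s ∧ C = invClass s}

/-- Lexicographic order on strings, with `0 < 1` and the leftmost digit most significant. -/
def strLt (s t : Fin n → Bool) : Prop :=
  ∃ i : Fin n, (∀ j : Fin n, j < i → s j = t j) ∧ s i < t i

/-- Extended lexicographic order on extended strings `s^b`
(`b = false` encodes `−`, `b = true` encodes `+`). -/
def extLt (p q : (Fin n → Bool) × Bool) : Prop :=
  strLt p.1 q.1 ∨ (p.1 = q.1 ∧ p.2 < q.2)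

/-- The twisted shift operator `F`. -/
def twistF (s : Fin n → Bool) : Fin n → Bool :=
  if h : 0 < n then
    (if shiftL s ⟨0, h⟩ = true then shiftL s else inv (shiftL s))
  else s

/-- The extended twisted shift operator `F̃`. -/
def extF (p : (Fin n → Bool) × Bool) : (Fin n → Bool) × Bool :=
  if h : 0 < n then
    (if twistF p.1 ⟨n - 1, Nat.sub_lt h Nat.one_pos⟩ = true then (twistF p.1, p.2)
     else (twistF p.1, !p.2))
  else p

/-- Cyclic successor on `Fin n`. -/
def finSucc (i : Fin n) : Fin n :=
  ⟨(i.val + 1) % n, Nat.mod_lt _ (Nat.lt_of_le_of_lt (Nat.zero_le _) i.isLt)⟩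

open scoped Classical in
/-- The (0-based) lexicographic rank of `μ i` among `μ₁,…,μₙ`:
the number of indices `j` with `μ j` strictly smaller than `μ i`. -/
noncomputable def rankOf {X : Type*} (lt : X → X → Prop) (μ : Fin n → X) (i : Fin n) : ℕ :=
  (univ.filter (fun j => lt (μ j) (μ i))).card

/-- `σ` is the cyclic permutation `(r₁ r₂ ⋯ rₙ)` built from the ranks `rᵢ` of `μᵢ`:
`σ(rᵢ) = r_{i+1}` (indices mod `n`). -/
def BuiltFrom {X : Type*} (lt : X → X → Prop) (μ : Fin n → X) (σ : Equiv.Perm (Fin n)) : Prop :=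
  ∀ i j : Fin n, rankOf lt μ i = j.val → (σ j).val = rankOf lt μ (finSucc i)

/-- `σ` consists of a single `n`-cycle. -/
def IsCyclicPerm (σ : Equiv.Perm (Fin n)) : Prop :=
  ∀ x y : Fin n, ∃ k : ℕ, (σ ^ k) x = y

/-- `σ` is unimodal: decreasing on an initial segment, then increasing. -/
def IsUnimodal (σ : Equiv.Perm (Fin n)) : Prop :=
  ∃ m : Fin n, (∀ i j : Fin n, i ≤ j → j ≤ m → σ j ≤ σ i) ∧
    (∀ i j : Fin n, m ≤ i → i ≤ j → σ i ≤ σ j)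

/-- Cyclic unimodal permutations. -/
def CUPperm (σ : Equiv.Perm (Fin n)) : Prop := IsCyclicPerm σ ∧ IsUnimodal σ

/-- The string `A(σ)` obtained from the itinerary of `σ` (`+ ↦ 0`, `− ↦ 1`),
with the last digit chosen so that the total number of 1's is even.
(Here `m = σ⁻¹ 0` is the unique element with `σ m` least.) -/
def Astr [NeZero n] (σ : Equiv.Perm (Fin n)) : Fin n → Bool :=
  fun i =>
    if i.val + 1 < n then decide ((σ ^ (i.val + 1)) (σ⁻¹ 0) < σ⁻¹ 0)
    else decide (Odd ((univ.filter (fun j : Fin n =>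
      j.val + 1 < n ∧ (σ ^ (j.val + 1)) (σ⁻¹ 0) < σ⁻¹ 0)).card))

/-- The string used for `Ψ(σ)`: itinerary digits with the last digit chosen
so that the total number of 1's is odd. -/
def BstrOdd [NeZero n] (σ : Equiv.Perm (Fin n)) : Fin n → Bool :=
  fun i =>
    if i.val + 1 < n then decide ((σ ^ (i.val + 1)) (σ⁻¹ 0) < σ⁻¹ 0)
    else !(decide (Odd ((univ.filter (fun j : Fin n =>
      j.val + 1 < n ∧ (σ ^ (j.val + 1)) (σ⁻¹ 0) < σ⁻¹ 0)).card)))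

/-- The itinerary of a cyclic unimodal permutation: `none` encodes `⋆` (position `n`),
`some true` encodes `−` (i.e. `σⁱ(m) < m`), `some false` encodes `+` (i.e. `σⁱ(m) > m`). -/
def itin [NeZero n] (σ : Equiv.Perm (Fin n)) : Fin n → Option Bool :=
  fun i =>
    if i.val + 1 = n then none
    else some (decide ((σ ^ (i.val + 1)) (σ⁻¹ 0) < σ⁻¹ 0))

/-- `σ` arises from the class `C` by the construction defining `λ`:
for some representative `t` of `C` beginning with `1`, `σ` is the cyclic permutation
built from the lexicographic ranks of the iterates of `t` under `F` (non-reflexive case)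
or of `t^−` under `F̃` (reflexive case). -/
def LamRel [NeZero n] (C : Set (Fin n → Bool)) (σ : Equiv.Perm (Fin n)) : Prop :=
  ∃ t : Fin n → Bool, t 0 = true ∧ C = invClass t ∧
    ((¬ ReflexiveStr t ∧ BuiltFrom strLt (fun i : Fin n => twistF^[i.val] t) σ) ∨
     (ReflexiveStr t ∧ BuiltFrom extLt (fun i : Fin n => extF^[i.val] (t, false)) σ))

/-- `σ` arises from the representative `s` by the Weiss–Rogers construction `Φ`:
`σ` is the cyclic permutation built from the lexicographic ranks of
`νᵢ = ι(Ξ(L^{i-1}(s)))`. -/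
def PhiBuilt (s : Fin n → Bool) (σ : Equiv.Perm (Fin n)) : Prop :=
  BuiltFrom strLt (fun i : Fin n => inv (xi (shiftL^[i.val] s))) σ

end Necklaces

namespace Necklaces

variable {n : ℕ}

lemma shiftL_iter (s : Fin n → Bool) (k : ℕ) (i : Fin n) :
    shiftL^[k] s i = s ⟨(i.val + k) % n,
      Nat.mod_lt _ (Nat.lt_of_le_of_lt (Nat.zero_le _) i.isLt)⟩ := by
  induction k generalizing s with
  | zero => simp [Nat.mod_eq_of_lt i.isLt]
  | succ k ih =>
      rw [Function.iterate_succ_apply, ih (shiftL s)]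
      show s _ = s _
      congr 1
      apply Fin.ext
      show ((i.val + k) % n + 1) % n = (i.val + (k+1)) % n
      rw [Nat.mod_add_mod]
      ring_nf

lemma inv_shiftL_iter (s : Fin n → Bool) (k : ℕ) :
    shiftL^[k] (inv s) = inv (shiftL^[k] s) := by
  funext i
  rw [shiftL_iter]
  show _ = !(shiftL^[k] s i)
  rw [shiftL_iter]
  rfl

lemma inv_inv (s : Fin n → Bool) : inv (inv s) = s := by
  funext i; simp [inv]

lemma shiftL_iter_n (s : Fin n → Bool) : shiftL^[n] s = s := by
  funext i
  rw [shiftL_iter]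
  congr 1
  apply Fin.ext
  show (i.val + n) % n = i.val
  rw [Nat.add_mod_right, Nat.mod_eq_of_lt i.isLt]

lemma shiftL_iter_mod (s : Fin n → Bool) (k : ℕ) :
    shiftL^[k] s = shiftL^[k % n] s := by
  funext i
  rw [shiftL_iter, shiftL_iter]
  congr 1
  apply Fin.ext
  show (i.val + k) % n = (i.val + k % n) % n
  conv_lhs => rw [Nat.add_mod]
  conv_rhs => rw [Nat.add_mod]
  rw [Nat.mod_mod_of_dvd _ dvd_rfl]

lemma shiftL_iter_mul {s : Fin n → Bool} {a : ℕ} (ha : shiftL^[a] s = s) (t : ℕ) :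
    shiftL^[a * t] s = s := by
  induction t with
  | zero => simp
  | succ t ih =>
      have : a * (t + 1) = a * t + a := by ring
      rw [this, Function.iterate_add_apply, ha, ih]

lemma inv_iter_even (s : Fin n → Bool) (t : ℕ) : inv^[2 * t] s = s := by
  induction t with
  | zero => simp
  | succ t ih =>
      have : 2 * (t + 1) = 2 * t + 2 := by ring
      rw [this, Function.iterate_add_apply]
      show inv^[2*t] (inv (inv s)) = s
      rw [inv_inv, ih]

lemma exists_minPeriod (hn : 0 < n) (s : Fin n → Bool) :
    ∃ d, 0 < d ∧ d ∣ n ∧ ∀ k, shiftL^[k] s = s ↔ d ∣ k := by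
  have hex : ∃ k, 0 < k ∧ shiftL^[k] s = s := ⟨n, hn, shiftL_iter_n s⟩
  classical
  set d := Nat.find hex with hd
  obtain ⟨hdpos, hdfix⟩ := Nat.find_spec hex
  have key : ∀ k, shiftL^[k] s = s → d ∣ k := by
    intro k hk
    have h1 : shiftL^[d * (k / d)] s = s := shiftL_iter_mul hdfix _
    have h2 : shiftL^[k % d] s = s := by
      have : k % d + d * (k / d) = k := by
        rw [Nat.mod_add_div]
      calc shiftL^[k % d] s = shiftL^[k % d] (shiftL^[d * (k/d)] s) := by rw [h1]
        _ = shiftL^[k % d + d * (k/d)] s := by rw [Function.iterate_add_apply]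
        _ = s := by rw [this, hk]
    by_contra hnd
    have hpos : 0 < k % d := Nat.pos_of_ne_zero (fun h => hnd (Nat.dvd_of_mod_eq_zero h))
    have := Nat.find_min hex (Nat.mod_lt k hdpos) 
    exact this ⟨hpos, h2⟩
  refine ⟨d, hdpos, key n (shiftL_iter_n s), fun k => ⟨key k, ?_⟩⟩
  rintro ⟨c, rfl⟩
  exact shiftL_iter_mul hdfix c

lemma anti_determined {j : ℕ} (hj : 0 < j) (hjn : j ≤ n) {s : Fin n → Bool}
    (hs : shiftL^[j] s = inv s) :
    ∀ a (ha : a < n), s ⟨a, ha⟩ =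
      xor (s ⟨a % j, Nat.lt_of_lt_of_le (Nat.mod_lt _ hj) hjn⟩)
        (decide ((a / j) % 2 = 1)) := by
  intro a
  induction a using Nat.strong_induction_on with
  | _ a IH =>
    intro ha
    by_cases hlt : a < j
    · have h1 : a % j = a := Nat.mod_eq_of_lt hlt
      have h2 : a / j = 0 := Nat.div_eq_of_lt hlt
      simp [h1, h2]
    · push_neg at hlt
      have haj : a - j < n := by omega
      have hstep : s ⟨a, ha⟩ = !(s ⟨a - j, haj⟩) := by
        have h := congrFun hs ⟨a - j, haj⟩
        rw [shiftL_iter] at h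
        have hidx : (a - j + j) % n = a := by
          rw [Nat.sub_add_cancel hlt, Nat.mod_eq_of_lt ha]
        simp only [hidx] at h
        exact h
      have hIH := IH (a - j) (by omega) haj
      have hmod : (a - j) % j = a % j := by
        conv_rhs => rw [show a = (a - j) + j by omega]
        rw [Nat.add_mod_right]
      have hdiv : a / j = (a - j) / j + 1 := by
        conv_lhs => rw [show a = (a - j) + j by omega]
        rw [Nat.add_div_right _ hj]
      rw [hstep, hIH]
      simp only [hmod, hdiv]
      rcases Nat.mod_two_eq_zero_or_one ((a - j) / j) with h | h
      · have h2 : ((a - j) / j + 1) % 2 = 1 := by omega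
        simp [h, h2]
      · have h2 : ((a - j) / j + 1) % 2 = 0 := by omega
        simp [h, h2]

lemma card_anti {j c : ℕ} (hj : 0 < j) (hc : 0 < c) (hn : n = j * (2 * c)) :
    (univ.filter (fun s : Fin n → Bool => shiftL^[j] s = inv s)).card = 2 ^ j := by
  have hjn : j ≤ n := by rw [hn]; nlinarith
  have hcard : (univ : Finset (Fin j → Bool)).card = 2 ^ j := by
    simp [Finset.card_univ]
  rw [← hcard]
  apply Finset.card_bij'
    (i := fun s _ => fun i : Fin j => s ⟨i.val, Nat.lt_of_lt_of_le i.isLt hjn⟩)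
    (j := fun t _ => fun i : Fin n =>
      xor (t ⟨i.val % j, Nat.mod_lt _ hj⟩) (decide ((i.val / j) % 2 = 1)))
  · intro s _; exact mem_univ _
  · intro t _
    rw [mem_filter]
    refine ⟨mem_univ _, ?_⟩
    funext i
    rw [shiftL_iter]
    show xor (t ⟨(i.val + j) % n % j, _⟩) (decide (((i.val + j) % n / j) % 2 = 1)) =
      !(xor (t ⟨i.val % j, _⟩) (decide ((i.val / j) % 2 = 1)))
    have han : i.val < n := i.isLt
    set a := i.val with ha
    by_cases hcase : a + j < n
    · have h1 : (a + j) % n = a + j := Nat.mod_eq_of_lt hcase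
      have h2 : (a + j) % j = a % j := Nat.add_mod_right a j
      have h3 : (a + j) / j = a / j + 1 := Nat.add_div_right a hj
      simp only [← ha, h1, h2, h3]
      rcases Nat.mod_two_eq_zero_or_one (a / j) with h | h
      · have h4 : (a / j + 1) % 2 = 1 := by omega
        simp [h, h4]
      · have h4 : (a / j + 1) % 2 = 0 := by omega
        simp [h, h4]
    · push_neg at hcase
      have hub : a / j < 2 * c :=
        Nat.div_lt_of_lt_mul (by rw [← hn]; exact han)
      have hlb : 2 * c - 1 ≤ a / j := by
        by_contra hcon
        push_neg at hcon
        rw [Nat.div_lt_iff_lt_mul hj] at hcon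
        have he : (2 * c - 1) * j + j = 2 * c * j := by
          rw [← Nat.succ_mul]
          congr 1
          omega
        have : a + j < 2 * c * j := by omega
        rw [Nat.mul_comm, ← hn] at this
        omega
      have hrlt : a % j < j := Nat.mod_lt _ hj
      have e1 : j * (a / j) + a % j = a := Nat.div_add_mod a j
      have hdiv : a / j = 2 * c - 1 := by omega
      have e2 : n = j * (a / j) + j := by
        rw [hn, hdiv, ← Nat.mul_succ]
        congr 1
        omega
      have h1 : (a + j) % n = a + j - n := by
        rw [Nat.mod_eq_sub_mod hcase, Nat.mod_eq_of_lt (by omega)]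
      have hb : a + j - n = a % j := by omega
      have h2 : (a + j - n) % j = a % j := by
        rw [hb, Nat.mod_mod_of_dvd _ dvd_rfl]
      have h3 : (a + j - n) / j = 0 := Nat.div_eq_of_lt (by rw [hb]; exact hrlt)
      have h5 : (a / j) % 2 = 1 := by omega
      simp only [← ha, h1, h2, h3, h5]
      simp
  · intro s hs
    rw [mem_filter] at hs
    funext i
    exact (anti_determined hj hjn hs.2 i.val i.isLt).symm
  · intro t _
    funext i
    have h1 : i.val % j = i.val := Nat.mod_eq_of_lt i.isLt
    have h2 : i.val / j = 0 := Nat.div_eq_of_lt i.isLt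
    show xor (t ⟨i.val % j, _⟩) (decide ((i.val / j) % 2 = 1)) = t i
    simp only [h1, h2]
    simp

lemma sum_moebius_divisors (k : ℕ) :
    ∑ m ∈ k.divisors, ArithmeticFunction.moebius m = if k = 1 then 1 else 0 := by
  have h := congrArg (fun f : ArithmeticFunction ℤ => f k)
    ArithmeticFunction.moebius_mul_coe_zeta
  rw [ArithmeticFunction.coe_mul_zeta_apply, ArithmeticFunction.one_apply] at h
  exact h

lemma inv_ne_self (hn : 0 < n) (s : Fin n → Bool) : inv s ≠ s := by
  intro h
  have := congrFun h ⟨0, hn⟩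
  simp [inv] at this

lemma card_fix {h m : ℕ} (hn2 : n = 2 * h) (hmh : m ∣ h) (hmodd : m % 2 = 1) (hh : 0 < h) :
    (univ.filter (fun s : Fin n → Bool =>
        shiftL^[h] s = inv s ∧ shiftL^[n / m] s = s)).card = 2 ^ (h / m) := by
  have hm0 : 0 < m := by omega
  set j := h / m with hj'
  have hjm : h = j * m := (Nat.div_mul_cancel hmh).symm
  have hj : 0 < j := Nat.div_pos (Nat.le_of_dvd hh hmh) hm0
  have hnm : n / m = 2 * j := by
    rw [hn2, hjm, show 2 * (j * m) = (2 * j) * m by ring, Nat.mul_div_cancel _ hm0]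
  obtain ⟨t, hmt⟩ : ∃ t, m = 2 * t + 1 := ⟨(m - 1) / 2, by omega⟩
  have key : ∀ (s : Fin n → Bool), shiftL^[j] s = inv s →
      ∀ t, shiftL^[j * t] s = inv^[t] s := by
    intro s hjs t
    induction t with
    | zero => simp
    | succ t ih =>
        rw [show j * (t + 1) = j * t + j by ring, Function.iterate_add_apply, hjs,
          inv_shiftL_iter, ih, ← Function.iterate_succ_apply' inv]
  have inv_even : ∀ (s : Fin n → Bool) (t : ℕ), inv^[2 * t] s = s := by
    intro s t
    induction t with
    | zero => simp
    | succ t ih =>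
        rw [show 2 * (t + 1) = 2 * t + 2 by ring, Function.iterate_add_apply]
        show inv^[2 * t] (inv (inv s)) = s
        rw [inv_inv, ih]
  have hset : (univ.filter (fun s : Fin n → Bool =>
      shiftL^[h] s = inv s ∧ shiftL^[n / m] s = s))
      = univ.filter (fun s : Fin n → Bool => shiftL^[j] s = inv s) := by
    ext s
    simp only [mem_filter, mem_univ, true_and]
    constructor
    · rintro ⟨h1, h2⟩
      rw [hnm] at h2
      have h2jt : shiftL^[2 * j * t] s = s := shiftL_iter_mul h2 t
      have heq : shiftL^[h] s = shiftL^[j] s := by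
        rw [hjm, hmt, show j * (2 * t + 1) = j + 2 * j * t by ring,
          Function.iterate_add_apply, h2jt]
      rw [← heq, h1]
    · intro hjs
      constructor
      · rw [hjm, key s hjs m, hmt, Function.iterate_succ_apply' inv, inv_even, ]
      · rw [hnm, show 2 * j = j * 2 by ring, key s hjs 2]
        simpa using inv_even s 1
  rw [hset]
  exact card_anti hj hm0 (by rw [hn2, hjm]; ring)

lemma per_s {h : ℕ} (hn2 : n = 2 * h) (hh : 0 < h) (s : Fin n → Bool)
    [Decidable (Primitive s)] (hsA : shiftL^[h] s = inv s) :
    (if Primitive s then (1 : ℤ) else 0) =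
      ∑ m ∈ h.divisors.filter (fun m => m % 2 = 1),
        (if shiftL^[n / m] s = s then (ArithmeticFunction.moebius m : ℤ) else 0) := by
  classical
  have hn0 : 0 < n := by omega
  obtain ⟨d, hd0, hdn, hdiff⟩ := exists_minPeriod hn0 s
  set ms := n / d with hms
  have hdms : d * ms = n := Nat.mul_div_cancel' hdn
  have hms0 : 0 < ms := Nat.div_pos (Nat.le_of_dvd hn0 hdn) hd0
  have hmsodd : ms % 2 = 1 := by
    rcases Nat.mod_two_eq_zero_or_one ms with he | ho
    · exfalso
      obtain ⟨e, hee⟩ : ∃ e, ms = 2 * e := ⟨ms / 2, by omega⟩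
      have hdh : d ∣ h := ⟨e, by
        have : d * ms = d * (2 * e) := by rw [hee]
        have h2 : d * (2 * e) = 2 * (d * e) := by ring
        omega⟩
      have hfix : shiftL^[h] s = s := (hdiff h).mpr hdh
      exact inv_ne_self hn0 s (by rw [← hsA]; exact hfix)
    · exact ho
  obtain ⟨d', hdd⟩ : ∃ d', d = 2 * d' := by
    refine ⟨d / 2, ?_⟩
    rcases Nat.mod_two_eq_zero_or_one d with he | ho
    · omega
    · exfalso
      have : (d * ms) % 2 = 1 := by
        rw [Nat.mul_mod, ho, hmsodd]
      omega
  have hmsh : ms ∣ h := ⟨d', by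
    have h1 : d * ms = 2 * (ms * d') := by rw [hdd]; ring
    omega⟩
  have hfin : ((h.divisors.filter (fun m => m % 2 = 1)).filter
      (fun m => shiftL^[n / m] s = s)) = ms.divisors := by
    ext m
    simp only [mem_filter, Nat.mem_divisors]
    constructor
    · rintro ⟨⟨⟨hmh, _⟩, hmodd⟩, hfix⟩
      refine ⟨?_, by omega⟩
      have hm0 : 0 < m := by omega
      have hmn : m ∣ n := hmh.trans ⟨2, by omega⟩
      have hd : d ∣ n / m := (hdiff _).mp hfix
      obtain ⟨t, ht⟩ := hd
      have hnt : n = m * (d * t) := by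
        have := Nat.div_mul_cancel hmn
        calc n = n / m * m := this.symm
          _ = (d * t) * m := by rw [ht]
          _ = m * (d * t) := by ring
      have : d * ms = d * (t * m) := by
        rw [hdms, hnt]; ring
      have hms_eq : ms = t * m := Nat.eq_of_mul_eq_mul_left hd0 this
      exact ⟨t, by rw [hms_eq]; ring⟩
    · rintro ⟨hmms, _⟩
      have hm0 : 0 < m := Nat.pos_of_dvd_of_pos hmms hms0
      obtain ⟨t, ht⟩ := id hmms
      have hmodd : m % 2 = 1 := by
        rcases Nat.mod_two_eq_zero_or_one m with he | ho
        · exfalso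
          have : ms % 2 = 0 := by
            rw [ht, Nat.mul_mod, he]
            simp
          omega
        · exact ho
      refine ⟨⟨⟨hmms.trans hmsh, by omega⟩, hmodd⟩, ?_⟩
      apply (hdiff _).mpr
      have hnm : n / m = d * t := by
        rw [← hdms, ht, show d * (m * t) = (d * t) * m by ring,
          Nat.mul_div_cancel _ hm0]
      rw [hnm]
      exact Dvd.intro t rfl
  have hprim : Primitive s ↔ ms = 1 := by
    constructor
    · intro hp
      by_contra hne
      have hdlt : d < n := by
        rcases Nat.lt_or_ge d n with h | h
        · exact h
        · exfalso
          have : d = n := Nat.le_antisymm (Nat.le_of_dvd hn0 hdn) h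
          rw [this] at hdms
          have : ms = 1 := by
            have hn' : n * ms = n * 1 := by omega
            exact Nat.eq_of_mul_eq_mul_left hn0 hn'
          exact hne this
      exact hp d hd0 hdlt ((hdiff d).mpr dvd_rfl)
    · intro h1 k hk0 hkn hfix
      have : d ∣ k := (hdiff k).mp hfix
      have hdn' : d = n := by
        rw [h1] at hdms
        omega
      have := Nat.le_of_dvd hk0 this
      omega
  calc (if Primitive s then (1 : ℤ) else 0)
      = (if ms = 1 then 1 else 0) := by
        by_cases hp : Primitive s
        · rw [if_pos hp, if_pos (hprim.mp hp)]
        · rw [if_neg hp, if_neg (fun hc => hp (hprim.mpr hc))]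
    _ = ∑ m ∈ ms.divisors, (ArithmeticFunction.moebius m : ℤ) :=
        (sum_moebius_divisors ms).symm
    _ = ∑ m ∈ (h.divisors.filter (fun m => m % 2 = 1)).filter
          (fun m => shiftL^[n / m] s = s), (ArithmeticFunction.moebius m : ℤ) := by
        rw [hfin]
    _ = _ := Finset.sum_filter _ _

open ArithmeticFunction in
/-- For every even `n ≥ 2`, the number of binary strings of length `n`
that are both primitive and reflexive (i.e. `ι(s)` is a cyclic shift of `s`) equals
`Σ_{m ∣ n/2, m odd} μ(m)·2^{n/(2m)}`. -/
theorem card_primitive_reflexive (n : ℕ) (h2 : 2 ≤ n) (hev : n % 2 = 0) :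
    (({s : Fin n → Bool | Primitive s ∧ ∃ k : ℕ, shiftL^[k] s = inv s}.ncard : ℕ) : ℤ) =
      ∑ m ∈ (n / 2).divisors.filter (fun m => m % 2 = 1), moebius m * 2 ^ (n / (2 * m)) := by
  classical
  obtain ⟨h, hn2⟩ : ∃ h, n = 2 * h := ⟨n / 2, by omega⟩
  have hh : 0 < h := by omega
  have hn0 : 0 < n := by omega
  have hdiv2 : n / 2 = h := by omega
  rw [hdiv2]
  have hset : {s : Fin n → Bool | Primitive s ∧ ∃ k : ℕ, shiftL^[k] s = inv s}
      = ↑((univ.filter (fun s : Fin n → Bool => shiftL^[h] s = inv s)).filter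
          (fun s => Primitive s)) := by
    ext s
    simp only [Set.mem_setOf_eq, coe_filter, mem_filter, mem_univ, true_and,
      Set.mem_setOf_eq]
    constructor
    · rintro ⟨hp, k, hk⟩
      refine ⟨?_, hp⟩
      have hk' : shiftL^[k % n] s = inv s := by rw [← shiftL_iter_mod]; exact hk
      have hkn : k % n < n := Nat.mod_lt _ hn0
      have hne : k % n ≠ 0 := by
        intro h0
        rw [h0] at hk'
        exact inv_ne_self hn0 s hk'.symm
      have h2k : shiftL^[k % n + k % n] s = s := by
        rw [Function.iterate_add_apply, hk', inv_shiftL_iter, hk', inv_inv]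
      have hsum : k % n + k % n = n := by
        by_contra hcon
        rcases Nat.lt_or_ge (k % n + k % n) n with hlt | hge
        · exact hp _ (by omega) hlt h2k
        · have hlt2 : k % n + k % n - n < n := by omega
          have hfix : shiftL^[k % n + k % n - n] s = s := by
            have : shiftL^[(k % n + k % n - n) + n] s = s := by
              rw [show (k % n + k % n - n) + n = k % n + k % n by omega]
              exact h2k
            rw [Function.iterate_add_apply, shiftL_iter_n] at this
            exact this
          have hpos : 0 < k % n + k % n - n := by omega
          exact hp _ hpos hlt2 hfix
      have : k % n = h := by omega
      rw [← this]
      exact hk'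
    · rintro ⟨hA, hp⟩
      exact ⟨hp, h, hA⟩
  rw [hset, Set.ncard_coe_finset]
  rw [← Finset.sum_boole]
  have step1 : ∑ s ∈ univ.filter (fun s : Fin n → Bool => shiftL^[h] s = inv s),
        (if Primitive s then (1 : ℤ) else 0)
      = ∑ s ∈ univ.filter (fun s : Fin n → Bool => shiftL^[h] s = inv s),
          ∑ m ∈ h.divisors.filter (fun m => m % 2 = 1),
            (if shiftL^[n / m] s = s then (moebius m : ℤ) else 0) := by
    apply Finset.sum_congr rfl
    intro s hs
    rw [mem_filter] at hs
    exact per_s hn2 hh s hs.2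
  rw [step1, Finset.sum_comm]
  apply Finset.sum_congr rfl
  intro m hm
  rw [mem_filter, Nat.mem_divisors] at hm
  obtain ⟨⟨hmh, _⟩, hmodd⟩ := hm
  rw [← Finset.sum_filter, Finset.sum_const, nsmul_eq_mul, Finset.filter_filter,
    card_fix hn2 hmh hmodd hh]
  have hexp : n / (2 * m) = h / m := by
    rw [hn2, Nat.mul_div_mul_left _ _ (by norm_num : (0:ℕ) < 2)]
  rw [hexp]
  push_cast
  ring


end Necklaces
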